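/- Dual transform of the binomial basis: let f_m(j) = C(m,j) p^{m−j} q^j for 0 ≤ m ≤ N. Then Σ_{j=0}^{N} k_n(j,N) f_m(j) = C(N−m, n) (λq)^n for all 0 ≤ n ≤ N. In particular, the Krawtchouk transform maps the m-th binomial column to the (N−m)-th binomial column of coefficients scaled by powers of λq. -/

import Mathlib

open Finset

noncomputable def kraw (lam p q : ℝ) (N j n : ℕ) : ℝ :=
  lam ^ n * ∑ i ∈ Finset.range (n + 1),
    ((N - j).choose (n - i) : ℝ) * (j.choose i : ℝ) * (-1) ^ i * p ^ i * q ^ (n - i)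

open Polynomial
lemma coeff_one_add_C_mul_X_pow (a : ℝ) (k i : ℕ) :
    ((1 + Polynomial.C a * Polynomial.X) ^ k).coeff i = (k.choose i : ℝ) * a ^ i := by
  rw [add_comm, add_pow, Polynomial.finset_sum_coeff]
  have key : ∀ b : ℕ, ((C a * X) ^ b * 1 ^ (k - b) * ((k.choose b : ℕ) : ℝ[X])).coeff i
      = if b = i then (k.choose b : ℝ) * a ^ b else 0 := by
    intro b
    rw [one_pow, mul_one, mul_pow, ← C_pow, ← Polynomial.C_eq_natCast,
      Polynomial.coeff_mul_C, Polynomial.coeff_C_mul, Polynomial.coeff_X_pow]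
    by_cases h : b = i
    · simp [h, mul_comm]
    · rw [if_neg h, if_neg (Ne.symm h)]; ring
  simp only [key]
  rw [Finset.sum_ite_eq' (Finset.range (k + 1))]
  by_cases h : i ≤ k
  · simp [Finset.mem_range, Nat.lt_succ_of_le h]
  · push_neg at h
    simp [Finset.mem_range, not_lt.2 (Nat.succ_le_of_lt h), Nat.choose_eq_zero_of_lt h]


lemma kraw_eq_coeff (lam p q : ℝ) (N j n : ℕ) :
    kraw lam p q N j n
      = lam ^ n * (((1 + C q * X) ^ (N - j) * (1 + C (-p) * X) ^ j).coeff n) := by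
  rw [Polynomial.coeff_mul, Finset.Nat.sum_antidiagonal_eq_sum_range_succ_mk]
  unfold kraw
  congr 1
  rw [← Finset.sum_range_reflect]
  refine Finset.sum_congr rfl fun i hi => ?_
  rw [Finset.mem_range, Nat.lt_succ_iff] at hi
  simp only [Nat.add_sub_cancel]
  rw [coeff_one_add_C_mul_X_pow, coeff_one_add_C_mul_X_pow,
    Nat.sub_sub_self hi]
  rw [neg_pow p]
  ring

theorem kraw_dual_binomial_transform (lam p q : ℝ) (hpq : p + q = 1) (N m n : ℕ)
    (hm : m ≤ N) (hn : n ≤ N) :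
    ∑ j ∈ Finset.range (N + 1),
        kraw lam p q N j n * ((m.choose j : ℝ) * p ^ (m - j) * q ^ j)
      = ((N - m).choose n : ℝ) * (lam * q) ^ n := by
  have step1 : ∀ j : ℕ,
      kraw lam p q N j n * ((m.choose j : ℝ) * p ^ (m - j) * q ^ j)
        = lam ^ n * ((C ((m.choose j : ℝ) * p ^ (m - j) * q ^ j) *
            ((1 + C q * X) ^ (N - j) * (1 + C (-p) * X) ^ j)).coeff n) := by
    intro j
    rw [kraw_eq_coeff, Polynomial.coeff_C_mul]
    ring
  simp only [step1]
  rw [← Finset.mul_sum, ← Polynomial.finset_sum_coeff]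
  have hS : ∑ j ∈ Finset.range (N + 1), C ((m.choose j : ℝ) * p ^ (m - j) * q ^ j) *
      ((1 + C q * X) ^ (N - j) * (1 + C (-p) * X) ^ j) = (1 + C q * X) ^ (N - m) := by
    rw [← Finset.sum_subset (Finset.range_subset_range.2 (by omega) :
        Finset.range (m + 1) ⊆ Finset.range (N + 1))
      (fun j _ hj => by
        rw [Finset.mem_range, Nat.lt_succ_iff, not_le] at hj
        simp [Nat.choose_eq_zero_of_lt hj])]
    have term : ∀ j ∈ Finset.range (m + 1),
        C ((m.choose j : ℝ) * p ^ (m - j) * q ^ j) *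
          ((1 + C q * X) ^ (N - j) * (1 + C (-p) * X) ^ j)
        = (1 + C q * X) ^ (N - m) *
            ((C q * (1 + C (-p) * X)) ^ j * (C p * (1 + C q * X)) ^ (m - j) *
              ((m.choose j : ℕ) : ℝ[X])) := by
      intro j hj
      rw [Finset.mem_range, Nat.lt_succ_iff] at hj
      have hNj : N - j = (N - m) + (m - j) := by omega
      rw [hNj, pow_add, mul_pow, mul_pow, ← Polynomial.C_eq_natCast]
      simp only [C_mul, C_pow]
      ring
    rw [Finset.sum_congr rfl term, ← Finset.mul_sum, ← add_pow]
    have hone : C q * (1 + C (-p) * X) + C p * (1 + C q * X) = 1 := by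
      have : (C p + C q : ℝ[X]) = 1 := by rw [← C_add, hpq, C_1]
      rw [C_neg]
      linear_combination (1 + X * C p - X * C q - X * C p + X * C q) * this
    rw [hone, one_pow, mul_one]
  rw [hS, coeff_one_add_C_mul_X_pow]
  ring
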